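/- Let Z_α have the Zeta distribution ζ(α) for α > 1. Then (α − 1) log Z_α converges in distribution, as α → 1⁺, to the standard exponential distribution Exp(1); that is, for every t ≥ 0, P((α−1) log Z_α ≤ t) → 1 − e^{−t} as α → 1⁺. -/
import Mathlib

open Filter

/-- `zetaR α = ∑_{n≥1} n^{−α}`, the Riemann zeta function for real `α > 1`. -/
noncomputable def zetaR (α : ℝ) : ℝ := ∑' n : ℕ, ((n : ℝ) + 1) ^ (-α)


lemma summableF {α : ℝ} (hα : 1 < α) : Summable (fun k : ℕ => ((k:ℝ)+1) ^ (-α)) := by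
  have := (Real.summable_nat_rpow (p := -α)).mpr (by linarith)
  have h2 := (summable_nat_add_iff (f := fun n : ℕ => (n:ℝ) ^ (-α)) 1).mpr this
  refine h2.congr fun n => ?_
  push_cast
  ring_nf

lemma telescope {s : ℝ} (hs : 0 < s) (M : ℕ) :
    HasSum (fun n : ℕ => ((n+M:ℝ)+1) ^ (-s) - ((n+M:ℝ)+2) ^ (-s)) (((M:ℝ)+1) ^ (-s)) := by
  have hnonneg : ∀ n : ℕ, 0 ≤ ((n+M:ℝ)+1) ^ (-s) - ((n+M:ℝ)+2) ^ (-s) := fun n =>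
    sub_nonneg.mpr (Real.rpow_le_rpow_of_nonpos (by positivity) (by linarith) (by linarith))
  rw [hasSum_iff_tendsto_nat_of_nonneg hnonneg]
  have hsum : ∀ n : ℕ, ∑ i ∈ Finset.range n, (((i+M:ℝ)+1) ^ (-s) - ((i+M:ℝ)+2) ^ (-s))
      = ((M:ℝ)+1) ^ (-s) - ((n+M:ℝ)+1) ^ (-s) := by
    intro n
    have := Finset.sum_range_sub' (f := fun i : ℕ => ((i+M:ℝ)+1) ^ (-s)) n
    simp only [Nat.cast_zero, zero_add] at this
    rw [← this]
    refine Finset.sum_congr rfl fun i _ => ?_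
    push_cast; ring_nf
  simp only [hsum]
  have h0 : Tendsto (fun n : ℕ => ((n+M:ℝ)+1) ^ (-s)) atTop (nhds 0) := by
    have : Tendsto (fun n : ℕ => ((n:ℝ)+M+1)) atTop atTop := by
      apply tendsto_atTop_add_const_right
      apply tendsto_atTop_add_const_right
      exact tendsto_natCast_atTop_atTop
    exact (tendsto_rpow_neg_atTop hs).comp this
  have := tendsto_const_nhds (x := ((M:ℝ)+1) ^ (-s)) (f := atTop (α := ℕ)) |>.sub h0
  simpa using this

lemma key_ineq {x s : ℝ} (hx : 0 < x) (hs : 0 < s) :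
    s * (x+1) ^ (-(s+1)) ≤ x ^ (-s) - (x+1) ^ (-s) ∧
      x ^ (-s) - (x+1) ^ (-s) ≤ s * x ^ (-(s+1)) := by
  obtain ⟨c, hc, hderiv⟩ := exists_hasDerivAt_eq_slope (fun y : ℝ => y ^ (-s))
      (fun y => (-s) * y ^ (-s - 1)) (by linarith : x < x + 1)
      (fun y hy => (Real.continuousAt_rpow_const y (-s)
        (Or.inl (by nlinarith [hy.1] : y ≠ 0))).continuousWithinAt)
      (fun y hy => Real.hasDerivAt_rpow_const (Or.inl (by nlinarith [hy.1] : y ≠ 0)))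
  have hc0 : 0 < c := lt_trans hx hc.1
  have heq : x ^ (-s) - (x+1) ^ (-s) = s * c ^ (-(s+1)) := by
    have : (-s) * c ^ (-s-1) = ((x+1) ^ (-s) - x ^ (-s)) / (x + 1 - x) := hderiv
    rw [show x + 1 - x = 1 by ring, div_one] at this
    have h2 : -s - 1 = -(s+1) := by ring
    rw [h2] at this
    linarith
  constructor
  · rw [heq]
    exact mul_le_mul_of_nonneg_left
      (Real.rpow_le_rpow_of_nonpos hc0 hc.2.le (by linarith)) hs.le
  · rw [heq]
    exact mul_le_mul_of_nonneg_left
      (Real.rpow_le_rpow_of_nonpos hx hc.1.le (by linarith)) hs.le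

lemma summable_shift {α : ℝ} (hα : 1 < α) (M : ℕ) :
    Summable (fun i : ℕ => ((i:ℝ)+M+1) ^ (-α)) := by
  have h2 := (summable_nat_add_iff (f := fun k : ℕ => ((k:ℝ)+1) ^ (-α)) M).mpr (summableF hα)
  refine h2.congr fun n => ?_
  push_cast
  ring_nf

lemma tail_bounds {s : ℝ} (hs : 0 < s) (M : ℕ) :
    ((M:ℝ)+1) ^ (-s) ≤ s * ∑' i : ℕ, ((i:ℝ)+M+1) ^ (-(s+1)) ∧
      s * ∑' i : ℕ, ((i:ℝ)+M+1) ^ (-(s+1)) ≤ ((M:ℝ)+1) ^ (-s) * (s+1) := by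
  have hα : 1 < s + 1 := by linarith
  have hsum := summable_shift hα M
  have htel := telescope hs M
  constructor
  · have hle : ∀ i : ℕ, ((i+M:ℝ)+1) ^ (-s) - ((i+M:ℝ)+2) ^ (-s) ≤ s * ((i:ℝ)+M+1) ^ (-(s+1)) := by
      intro i
      have := (key_ineq (x := (i:ℝ)+M+1) (by positivity) hs).2
      have hx : (i:ℝ)+M+1+1 = (i+M:ℝ)+2 := by push_cast; ring
      rw [hx] at this
      convert this using 3 <;> push_cast <;> ring
    calc ((M:ℝ)+1) ^ (-s) = ∑' i : ℕ, (((i+M:ℝ)+1) ^ (-s) - ((i+M:ℝ)+2) ^ (-s)) := htel.tsum_eq.symm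
      _ ≤ ∑' i : ℕ, s * ((i:ℝ)+M+1) ^ (-(s+1)) := Summable.tsum_le_tsum hle htel.summable (hsum.mul_left s)
      _ = s * ∑' i : ℕ, ((i:ℝ)+M+1) ^ (-(s+1)) := tsum_mul_left
  · have hsplit : ∑' i : ℕ, ((i:ℝ)+M+1) ^ (-(s+1))
        = ((M:ℝ)+1) ^ (-(s+1)) + ∑' i : ℕ, ((i:ℝ)+(M+1)+1) ^ (-(s+1)) := by
      rw [Summable.tsum_eq_zero_add hsum]
      congr 1
      · norm_num
      · exact tsum_congr fun b => by push_cast; ring_nf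
    have hle : ∀ i : ℕ, s * ((i:ℝ)+(M+1)+1) ^ (-(s+1))
        ≤ ((i+M:ℝ)+1) ^ (-s) - ((i+M:ℝ)+2) ^ (-s) := by
      intro i
      have := (key_ineq (x := (i:ℝ)+M+1) (by positivity) hs).1
      have hx : (i:ℝ)+M+1+1 = (i+M:ℝ)+2 := by push_cast; ring
      rw [hx] at this
      convert this using 3 <;> push_cast <;> ring
    have h1 : s * ∑' i : ℕ, ((i:ℝ)+(M+1)+1) ^ (-(s+1)) ≤ ((M:ℝ)+1) ^ (-s) := by
      have hs2 : Summable (fun i : ℕ => s * ((i:ℝ)+((M:ℝ)+1)+1) ^ (-(s+1))) := by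
        refine ((summable_shift hα (M+1)).mul_left s).congr fun n => ?_
        push_cast; ring_nf
      have h0 := Summable.tsum_le_tsum hle hs2 htel.summable
      rw [tsum_mul_left, htel.tsum_eq] at h0
      exact h0
    have h2 : ((M:ℝ)+1) ^ (-(s+1)) ≤ ((M:ℝ)+1) ^ (-s) :=
      Real.rpow_le_rpow_of_exponent_le (by simp) (by linarith)
    rw [hsplit, mul_add]
    have := mul_le_mul_of_nonneg_left h2 hs.le
    linarith

lemma sandwich (t : ℝ) (ht : 0 ≤ t) {α : ℝ} (hα : 1 < α) :
    1 - α * Real.exp (-t) ≤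
      (∑' k : ℕ, if (α - 1) * Real.log ((k : ℝ) + 1) ≤ t then ((k : ℝ) + 1) ^ (-α) else 0) /
        zetaR α ∧
    (∑' k : ℕ, if (α - 1) * Real.log ((k : ℝ) + 1) ≤ t then ((k : ℝ) + 1) ^ (-α) else 0) /
        zetaR α ≤ 1 - (2:ℝ) ^ (-(α-1)) * Real.exp (-t) / α := by
  have hs : (0:ℝ) < α - 1 := by linarith
  set s := α - 1 with hs_def
  have hts : 0 ≤ t / s := by positivity
  have hexp1 : 1 ≤ Real.exp (t/s) := Real.one_le_exp hts
  set N := Nat.floor (Real.exp (t/s) - 1) with hN_def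
  set M := N + 1 with hM_def
  -- condition characterization
  have hcond : ∀ k : ℕ, ((α - 1) * Real.log ((k:ℝ)+1) ≤ t ↔ k ≤ N) := by
    intro k
    have hk1 : (0:ℝ) < (k:ℝ)+1 := by positivity
    rw [← hs_def, mul_comm, ← le_div_iff₀ hs, Real.log_le_iff_le_exp hk1]
    constructor
    · intro h; exact Nat.le_floor (by linarith)
    · intro h
      have h1 := Nat.floor_le (sub_nonneg.mpr hexp1)
      have h2 : (k:ℝ) ≤ (N:ℝ) := Nat.cast_le.mpr h
      linarith
  set F : ℕ → ℝ := fun k => ((k:ℝ)+1) ^ (-α) with hF_def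
  set tail : ℝ := ∑' i : ℕ, ((i:ℝ)+M+1) ^ (-α) with htail_def
  have hnum : (∑' k : ℕ, if (α - 1) * Real.log ((k : ℝ) + 1) ≤ t then ((k : ℝ) + 1) ^ (-α) else 0)
      = ∑ k ∈ Finset.range M, F k := by
    rw [tsum_eq_sum (s := Finset.range M) (fun k hk => if_neg (fun h =>
      hk (Finset.mem_range.mpr (Nat.lt_succ_of_le ((hcond k).mp h)))))]
    exact Finset.sum_congr rfl fun k hk =>
      if_pos ((hcond k).mpr (Nat.lt_succ_iff.mp (Finset.mem_range.mp hk)))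
  have hzeta : (∑ k ∈ Finset.range M, F k) + tail = zetaR α := by
    have h := Summable.sum_add_tsum_nat_add (f := F) M (summableF hα)
    rw [zetaR, ← h]
    congr 1
    rw [htail_def]
    exact tsum_congr fun i => by rw [hF_def]; push_cast; ring_nf
  -- bounds with exponent rewritten
  have hsa : s + 1 = α := by rw [hs_def]; ring
  have hb := tail_bounds hs M
  rw [hsa] at hb
  have hz := tail_bounds hs 0
  rw [hsa] at hz
  have hz0 : (∑' i : ℕ, ((i:ℝ)+(0:ℕ)+1) ^ (-α)) = zetaR α := by
    rw [zetaR]; exact tsum_congr fun i => by norm_num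
  rw [hz0] at hz
  norm_num [Real.one_rpow] at hz
  -- hz : 1 ≤ s * zetaR α ∧ s * zetaR α ≤ s + 1
  have hζpos : 0 < zetaR α := by nlinarith [hz.1]
  have htailnn : 0 ≤ tail := tsum_nonneg fun i => Real.rpow_nonneg (by positivity) _
  set g : ℝ := ((M:ℝ)+1) ^ (-s) with hg_def
  have hgnn : 0 ≤ g := Real.rpow_nonneg (by positivity) _
  -- bounds on M+1
  have hM1 : Real.exp (t/s) ≤ (M:ℝ)+1 := by
    have := Nat.lt_floor_add_one (Real.exp (t/s) - 1)
    have hMN : (M:ℝ) = (N:ℝ) + 1 := by rw [hM_def]; push_cast; ring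
    rw [hMN]; linarith
  have hM2 : (M:ℝ)+1 ≤ 2 * Real.exp (t/s) := by
    have h1 := Nat.floor_le (sub_nonneg.mpr hexp1)
    have hMN : (M:ℝ) = (N:ℝ) + 1 := by rw [hM_def]; push_cast; ring
    rw [hMN]; linarith
  have hexp_eq : Real.exp (t/s) ^ (-s) = Real.exp (-t) := by
    rw [← Real.exp_mul]
    congr 1
    field_simp
  have hg_up : g ≤ Real.exp (-t) := by
    rw [hg_def, ← hexp_eq]
    exact Real.rpow_le_rpow_of_nonpos (Real.exp_pos _) hM1 (by linarith)
  have hg_lo : Real.exp (-t) * (2:ℝ) ^ (-s) ≤ g := by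
    have h1 : ((M:ℝ)+1) ^ (-s) ≥ (2 * Real.exp (t/s)) ^ (-s) :=
      Real.rpow_le_rpow_of_nonpos (by positivity) hM2 (by linarith)
    have h2 : (2 * Real.exp (t/s)) ^ (-s) = (2:ℝ) ^ (-s) * Real.exp (-t) := by
      rw [Real.mul_rpow (by norm_num) (Real.exp_pos _).le, hexp_eq]
    rw [hg_def]
    rw [h2] at h1
    linarith
  -- tail/zeta bounds
  have hr_up : tail / zetaR α ≤ g * α := by
    rw [div_le_iff₀ hζpos]
    nlinarith [hb.2, hz.1, mul_le_mul_of_nonneg_left hz.1 (mul_nonneg hgnn (by linarith : (0:ℝ) ≤ α))]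
  have hr_lo : g / α ≤ tail / zetaR α := by
    rw [div_le_div_iff₀ (by linarith) hζpos]
    nlinarith [hb.1, hz.2]
  -- final
  have hratio : (∑' k : ℕ, if (α - 1) * Real.log ((k : ℝ) + 1) ≤ t then ((k : ℝ) + 1) ^ (-α) else 0) /
      zetaR α = 1 - tail / zetaR α := by
    rw [hnum, show (∑ k ∈ Finset.range M, F k) = zetaR α - tail from by linarith,
      sub_div, div_self hζpos.ne']
  rw [hratio]
  constructor
  · nlinarith [hg_up, hr_up]
  · have : Real.exp (-t) * (2:ℝ) ^ (-s) / α ≤ tail / zetaR α := le_trans (by gcongr) hr_lo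
    have h3 : (2:ℝ) ^ (-s) * Real.exp (-t) = Real.exp (-t) * (2:ℝ) ^ (-s) := by ring
    rw [h3]
    linarith

/-- If `Z_α` has the Zeta distribution of parameter `α > 1`, then `(α−1) log Z_α`
converges in distribution to `Exp(1)` as `α → 1⁺`: for every `t ≥ 0`,
`P((α−1) log Z_α ≤ t) = (∑_{k≥1, (α−1) log k ≤ t} k^{−α})/ζ(α) → 1 − e^{−t}`. -/
theorem stmt7 (t : ℝ) (ht : 0 ≤ t) :
    Tendsto (fun α : ℝ =>
        (∑' k : ℕ, if (α - 1) * Real.log ((k : ℝ) + 1) ≤ t then ((k : ℝ) + 1) ^ (-α) else 0) /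
          zetaR α)
      (nhdsWithin 1 (Set.Ioi 1)) (nhds (1 - Real.exp (-t))) := by
  have hlow : Tendsto (fun α : ℝ => 1 - α * Real.exp (-t))
      (nhdsWithin 1 (Set.Ioi 1)) (nhds (1 - Real.exp (-t))) := by
    have : ContinuousAt (fun α : ℝ => 1 - α * Real.exp (-t)) 1 := by fun_prop
    have h := this.tendsto.mono_left (nhdsWithin_le_nhds (s := Set.Ioi 1))
    simpa using h
  have hupp : Tendsto (fun α : ℝ => 1 - (2:ℝ) ^ (-(α-1)) * Real.exp (-t) / α)
      (nhdsWithin 1 (Set.Ioi 1)) (nhds (1 - Real.exp (-t))) := by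
    have h2 : ContinuousAt (fun α : ℝ => (2:ℝ) ^ (-(α-1))) 1 :=
      continuousAt_const.rpow ((continuousAt_id.sub continuousAt_const).neg)
        (Or.inl (by norm_num))
    have : ContinuousAt (fun α : ℝ => 1 - (2:ℝ) ^ (-(α-1)) * Real.exp (-t) / α) 1 :=
      continuousAt_const.sub ((h2.mul continuousAt_const).div continuousAt_id (by norm_num))
    have h := this.tendsto.mono_left (nhdsWithin_le_nhds (s := Set.Ioi 1))
    simpa [Real.rpow_zero] using h
  refine tendsto_of_tendsto_of_tendsto_of_le_of_le' hlow hupp ?_ ?_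
  · filter_upwards [self_mem_nhdsWithin] with α hα
    exact (sandwich t ht hα).1
  · filter_upwards [self_mem_nhdsWithin] with α hα
    exact (sandwich t ht hα).2
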